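/- Let d ≥ 1, let M, Q be real d×d matrices, let v, w be symmetric real d×d matrices, and let ψ′₀ be a symmetric solution of the algebraic Riccati equation ψ′₀M + Mᵀψ′₀ − 2ψ′₀QᵀQψ′₀ + v = 0. Assume w − ψ′₀ is invertible and that for every t ∈ [0,T] the matrix (w − ψ′₀)⁻¹ + 2∫₀ᵗ exp((M − 2QᵀQψ′₀)s)·QᵀQ·exp((Mᵀ − 2ψ′₀QᵀQ)s) ds is invertible. Then the function ψ(t) := ψ′₀ + exp((Mᵀ − 2ψ′₀QᵀQ)t)·[(w − ψ′₀)⁻¹ + 2∫₀ᵗ exp((M − 2QᵀQψ′₀)s)·QᵀQ·exp((Mᵀ − 2ψ′₀QᵀQ)s) ds]⁻¹·exp((M − 2QᵀQψ′₀)t) satisfies ψ(0) = w and, for every t ∈ [0,T], ψ is differentiable at t with ψ′(t) = ψ(t)M + Mᵀψ(t) − 2ψ(t)QᵀQψ(t) + v. -/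

import Mathlib

open Matrix NormedSpace

attribute [local instance] Matrix.linftyOpNormedRing Matrix.linftyOpNormedAlgebra

theorem stmt_4 (d : ℕ) (hd : 1 ≤ d) (T : ℝ) (hT : 0 < T)
    (M Q v w ψ'₀ : Matrix (Fin d) (Fin d) ℝ)
    (hv : v.IsSymm) (hw : w.IsSymm) (hψ'₀ : ψ'₀.IsSymm)
    (hARE : ψ'₀ * M + Mᵀ * ψ'₀ - (2:ℝ) • (ψ'₀ * (Qᵀ * Q) * ψ'₀) + v = 0)
    (hwψ : IsUnit (w - ψ'₀))
    (G : ℝ → Matrix (Fin d) (Fin d) ℝ)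
    (hG : ∀ t, G t = (w - ψ'₀)⁻¹ +
      (2:ℝ) • ∫ s in (0:ℝ)..t,
        exp (s • (M - (2:ℝ) • ((Qᵀ * Q) * ψ'₀))) * (Qᵀ * Q) *
          exp (s • (Mᵀ - (2:ℝ) • (ψ'₀ * (Qᵀ * Q)))))
    (hGinv : ∀ t ∈ Set.Icc (0:ℝ) T, IsUnit (G t))
    (ψ : ℝ → Matrix (Fin d) (Fin d) ℝ)
    (hψ : ∀ t, ψ t = ψ'₀ +
      exp (t • (Mᵀ - (2:ℝ) • (ψ'₀ * (Qᵀ * Q)))) * (G t)⁻¹ *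
        exp (t • (M - (2:ℝ) • ((Qᵀ * Q) * ψ'₀)))) :
    ψ 0 = w ∧ ∀ t ∈ Set.Icc (0:ℝ) T,
      HasDerivAt ψ (ψ t * M + Mᵀ * ψ t - (2:ℝ) • (ψ t * (Qᵀ * Q) * ψ t) + v) t := by
  set K := Qᵀ * Q with hK
  set A := M - (2:ℝ) • (K * ψ'₀) with hA
  set B := Mᵀ - (2:ℝ) • (ψ'₀ * K) with hB
  constructor
  · have hG0 : G 0 = (w - ψ'₀)⁻¹ := by
      rw [hG 0, intervalIntegral.integral_same, smul_zero, add_zero]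
    rw [hψ 0, hG0, zero_smul, zero_smul, exp_zero, one_mul, mul_one,
      Matrix.nonsing_inv_nonsing_inv _ ((Matrix.isUnit_iff_isUnit_det _).mp hwψ),
      add_sub_cancel]
  · intro t ht
    have hE : HasDerivAt (fun s : ℝ => exp (s • A)) (exp (t • A) * A) t :=
      hasDerivAt_exp_smul_const A t
    have hF : HasDerivAt (fun s : ℝ => exp (s • B)) (B * exp (t • B)) t :=
      hasDerivAt_exp_smul_const' B t
    have hfc : Continuous fun s : ℝ => exp (s • A) * K * exp (s • B) :=
      ((exp_continuous.comp (continuous_id.smul continuous_const)).mul continuous_const).mul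
        (exp_continuous.comp (continuous_id.smul continuous_const))
    have hI : HasDerivAt (fun u : ℝ => ∫ s in (0:ℝ)..u, exp (s • A) * K * exp (s • B))
        (exp (t • A) * K * exp (t • B)) t :=
      intervalIntegral.integral_hasDerivAt_right (hfc.intervalIntegrable _ _)
        (by haveI : TopologicalSpace.PseudoMetrizableSpace (Matrix (Fin d) (Fin d) ℝ) := inferInstanceAs (TopologicalSpace.PseudoMetrizableSpace (Fin d → Fin d → ℝ)); exact hfc.stronglyMeasurableAtFilter _ _) hfc.continuousAt
    have hGder : HasDerivAt G ((2:ℝ) • (exp (t • A) * K * exp (t • B))) t := by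
      rw [funext hG]
      exact (hI.const_smul (2:ℝ)).const_add _
    have hu := hGinv t ht
    have h1 : HasFDerivAt Ring.inverse
        (-(ContinuousLinearMap.mulLeftRight ℝ _ ↑hu.unit⁻¹ ↑hu.unit⁻¹)) (G t) := by
      have := hasFDerivAt_ringInverse (𝕜 := ℝ) hu.unit
      rwa [hu.unit_spec] at this
    have hIinv : HasDerivAt (fun s => (G s)⁻¹)
        (-((G t)⁻¹ * ((2:ℝ) • (exp (t • A) * K * exp (t • B))) * (G t)⁻¹)) t := by
      have h2 := h1.comp_hasDerivAt t hGder
      simp only [Function.comp_def, ContinuousLinearMap.neg_apply,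
        ContinuousLinearMap.mulLeftRight_apply] at h2
      simp only [← Matrix.nonsing_inv_eq_ringInverse] at h2 ⊢
      rwa [Matrix.coe_units_inv, hu.unit_spec] at h2
    have hD : HasDerivAt (fun s => ψ'₀ + exp (s • B) * (G s)⁻¹ * exp (s • A))
        ((B * exp (t • B) * (G t)⁻¹ +
          exp (t • B) * -((G t)⁻¹ * ((2:ℝ) • (exp (t • A) * K * exp (t • B))) * (G t)⁻¹))
            * exp (t • A) +
          exp (t • B) * (G t)⁻¹ * (exp (t • A) * A)) t :=
      (((hF.mul hIinv).mul hE).const_add ψ'₀)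
    rw [funext hψ]
    convert hD using 1
    rw [eq_neg_of_add_eq_zero_right hARE, hA, hB]
    simp only [two_smul]
    noncomm_ring
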